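/- Let k^α(n) = Γ(n+α)/(Γ(α)Γ(n+1)) be the Cesàro kernel. For n, u ∈ ℕ₀, real t > 0, and α a positive real that is not a nonnegative integer, the following identity holds: e^{-tu} ∑_{j=max(u,n)}^∞ C(j,u) k^{-α}(j-n) (1-e^{-t})^{j-u} = e^{-tα} ∑_{j=0}^{min(u,n)} C(n,j) k^{-α}(u-j) e^{-tj} (1-e^{-t})^{n-j}, where C(a,b) denotes the binomial coefficient. -/

import Mathlib

open Real Filter Finset Set Topology Metric

/-- The Cesàro kernel of order `-α`, via Gamma functions. -/
noncomputable def kneg (α : ℝ) (m : ℕ) : ℝ :=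
  Real.Gamma (m - α) / (Real.Gamma (-α) * Real.Gamma (m + 1))

section Aux
variable {β : ℝ}

lemma gamma_neg_ne_zero (hβ : ∀ z : ℤ, β ≠ z) : Real.Gamma (-β) ≠ 0 :=
  Real.Gamma_ne_zero fun m h => hβ m (by push_cast; linarith)

lemma gamma_sub_ne_zero (hβ : ∀ z : ℤ, β ≠ z) (m : ℕ) : Real.Gamma ((m : ℝ) - β) ≠ 0 :=
  Real.Gamma_ne_zero fun k h => hβ ((m : ℤ) + k) (by push_cast; linarith)

lemma kneg_eq (β : ℝ) (m : ℕ) :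
    kneg β m = Real.Gamma ((m : ℝ) - β) / (Real.Gamma (-β) * m.factorial) := by
  rw [kneg, Real.Gamma_nat_eq_factorial]

lemma kneg_ne_zero (hβ : ∀ z : ℤ, β ≠ z) (m : ℕ) : kneg β m ≠ 0 := by
  rw [kneg_eq]
  exact div_ne_zero (gamma_sub_ne_zero hβ m)
    (mul_ne_zero (gamma_neg_ne_zero hβ) (by positivity))

lemma kneg_zero (hβ : ∀ z : ℤ, β ≠ z) : kneg β 0 = 1 := by
  rw [kneg_eq]
  simp [div_self (gamma_neg_ne_zero hβ)]

lemma kneg_succ (hβ : ∀ z : ℤ, β ≠ z) (m : ℕ) :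
    ((m : ℝ) + 1) * kneg β (m + 1) = ((m : ℝ) - β) * kneg β m := by
  have hm : ((m : ℝ) - β) ≠ 0 := sub_ne_zero.2 fun h => hβ m (by push_cast; linarith)
  have hg : Real.Gamma (((m + 1 : ℕ) : ℝ) - β) = ((m : ℝ) - β) * Real.Gamma ((m : ℝ) - β) := by
    have : (((m + 1 : ℕ) : ℝ) - β) = ((m : ℝ) - β) + 1 := by push_cast; ring
    rw [this, Real.Gamma_add_one hm]
  rw [kneg_eq, kneg_eq, hg, Nat.factorial_succ]
  have h1 : Real.Gamma (-β) ≠ 0 := gamma_neg_ne_zero hβ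
  have h2 : (m.factorial : ℝ) ≠ 0 := by positivity
  push_cast
  field_simp

lemma tendsto_ratio_aux (c : ℝ) :
    Tendsto (fun m : ℕ => c / ((m : ℝ) + 1)) atTop (𝓝 0) :=
  Tendsto.div_atTop tendsto_const_nhds
    (tendsto_atTop_add_const_right atTop 1 tendsto_natCast_atTop_atTop)

lemma tendsto_ratio (β : ℝ) :
    Tendsto (fun m : ℕ => |((m : ℝ) - β) / ((m : ℝ) + 1)|) atTop (𝓝 1) := by
  have h0 : Tendsto (fun m : ℕ => ((m : ℝ) - β) / ((m : ℝ) + 1)) atTop (𝓝 1) := by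
    have h1 := (tendsto_const_nhds (x := (1:ℝ)) (f := (atTop : Filter ℕ))).sub
      (tendsto_ratio_aux (β + 1))
    rw [sub_zero] at h1
    refine h1.congr fun m => ?_
    have : ((m : ℝ) + 1) ≠ 0 := by positivity
    field_simp
    ring
  have := (continuous_abs.tendsto 1).comp h0
  simpa [Function.comp_def] using this

lemma tendsto_ratio2 :
    Tendsto (fun m : ℕ => ((m : ℝ) + 2) / ((m : ℝ) + 1)) atTop (𝓝 1) := by
  have h1 := (tendsto_const_nhds (x := (1:ℝ)) (f := (atTop : Filter ℕ))).add
    (tendsto_ratio_aux 1)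
  rw [add_zero] at h1
  refine h1.congr fun m => ?_
  have : ((m : ℝ) + 1) ≠ 0 := by positivity
  field_simp
  ring

lemma summable_kneg_aux (hβ : ∀ z : ℤ, β ≠ z) {r : ℝ} (h0 : 0 < r) (h1 : r < 1) :
    Summable (fun m : ℕ => |kneg β m| * ((m : ℝ) + 1) * r ^ m) := by
  apply summable_of_ratio_test_tendsto_lt_one h1
  · filter_upwards with m
    have := kneg_ne_zero hβ m
    positivity
  · have hratio : ∀ m : ℕ, ‖|kneg β (m + 1)| * ((m + 1 : ℕ) + 1 : ℝ) * r ^ (m + 1)‖ /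
        ‖|kneg β m| * ((m : ℝ) + 1) * r ^ m‖ =
        |((m : ℝ) - β) / ((m : ℝ) + 1)| * (((m : ℝ) + 2) / ((m : ℝ) + 1)) * r := by
      intro m
      have hknz : kneg β m ≠ 0 := kneg_ne_zero hβ m
      have hknz1 : kneg β (m + 1) ≠ 0 := kneg_ne_zero hβ (m + 1)
      have hk1 : kneg β (m + 1) = (((m : ℝ) - β) / ((m : ℝ) + 1)) * kneg β m := by
        have := kneg_succ hβ m
        have hm1 : ((m : ℝ) + 1) ≠ 0 := by positivity
        field_simp
        linarith [this]
      rw [Real.norm_eq_abs, Real.norm_eq_abs, abs_mul, abs_mul, abs_mul, abs_mul, abs_abs,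
        abs_abs, hk1, abs_mul]
      have hm1 : ((m : ℝ) + 1) > 0 := by positivity
      have habs1 : |((m + 1 : ℕ) + 1 : ℝ)| = (m : ℝ) + 2 := by
        rw [abs_of_pos (by positivity)]; push_cast; ring
      have habs2 : |((m : ℝ) + 1)| = (m : ℝ) + 1 := abs_of_pos hm1
      have habs3 : |r ^ (m + 1)| = r ^ m * r := by
        rw [abs_of_pos (by positivity), pow_succ]
      have habs4 : |r ^ m| = r ^ m := abs_of_pos (by positivity)
      rw [habs1, habs2, habs3, habs4]
      have hrm : r ^ m ≠ 0 := by positivity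
      have hka : |kneg β m| ≠ 0 := abs_ne_zero.2 hknz
      field_simp
    simp_rw [hratio]
    have := ((tendsto_ratio β).mul tendsto_ratio2).mul
      (tendsto_const_nhds (x := r) (f := (atTop : Filter ℕ)))
    simpa using this

end Aux

section Binomial
variable {β : ℝ}

theorem hasSum_kneg (hβ : ∀ z : ℤ, β ≠ z) {x : ℝ} (hx0 : 0 ≤ x) (hx1 : x < 1) :
    HasSum (fun m : ℕ => kneg β m * x ^ m) ((1 - x) ^ β) := by
  set r : ℝ := (x + 1) / 2 with hr
  have hr0 : 0 < r := by rw [hr]; linarith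
  have hrx : x < r := by rw [hr]; linarith
  have hr1 : r < 1 := by rw [hr]; linarith
  -- the series coefficients and derivative series
  set g : ℕ → ℝ → ℝ := fun m z => kneg β m * z ^ m with hgdef
  set g' : ℕ → ℝ → ℝ := fun m z => kneg β m * ((m : ℝ) * z ^ (m - 1)) with hg'def
  have hu' : Summable (fun m : ℕ => |kneg β m| * ((m : ℝ) + 1) * r ^ m) :=
    summable_kneg_aux hβ hr0 hr1
  set u : ℕ → ℝ := fun m => |kneg β m| * ((m : ℝ) + 1) * r ^ m / r with hudef
  have hu : Summable u := hu'.div_const r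
  have hg : ∀ (m : ℕ), ∀ y ∈ ball (0 : ℝ) r, HasDerivAt (g m) (g' m y) y := fun m y _ =>
    (hasDerivAt_pow m y).const_mul _
  have hbound : ∀ (m : ℕ), ∀ y ∈ ball (0 : ℝ) r, ‖g' m y‖ ≤ u m := by
    intro m y hy
    have hyr : |y| ≤ r := by
      rw [mem_ball, dist_zero_right, Real.norm_eq_abs] at hy; exact hy.le
    have key : (m : ℝ) * |y| ^ (m - 1) ≤ ((m : ℝ) + 1) * r ^ m / r := by
      match m with
      | 0 => simp; positivity
      | (k + 1) =>
        have h1 : |y| ^ k ≤ r ^ k := pow_le_pow_left₀ (abs_nonneg y) hyr k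
        have h2 : ((k + 1 : ℕ) : ℝ) + 1 = (k : ℝ) + 2 := by push_cast; ring
        have : (((k + 1 : ℕ) : ℝ) + 1) * r ^ (k + 1) / r = ((k : ℝ) + 2) * r ^ k := by
          rw [h2, pow_succ]; field_simp
        rw [this]
        simp only [Nat.add_sub_cancel]
        push_cast
        have hk1 : (0 : ℝ) ≤ (k : ℝ) + 1 := by positivity
        nlinarith [pow_nonneg (abs_nonneg y) k, pow_nonneg hr0.le k]
    calc ‖g' m y‖ = |kneg β m| * ((m : ℝ) * |y| ^ (m - 1)) := by
          simp only [hg'def, Real.norm_eq_abs, abs_mul, abs_pow]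
          rw [abs_of_nonneg (by positivity : (0:ℝ) ≤ (m:ℝ))]
      _ ≤ |kneg β m| * (((m : ℝ) + 1) * r ^ m / r) := by
          apply mul_le_mul_of_nonneg_left key (abs_nonneg _)
      _ = u m := by rw [hudef]; ring
  have hsum0 : Summable fun m => g m 0 := by
    apply summable_of_ne_finset_zero (s := {0})
    intro m hm
    simp only [Finset.mem_singleton] at hm
    simp [hgdef, zero_pow hm]
  have hFder : ∀ y ∈ ball (0 : ℝ) r,
      HasDerivAt (fun z => ∑' m, g m z) (∑' m, g' m y) y := fun y hy =>
    hasDerivAt_tsum_of_isPreconnected hu isOpen_ball (convex_ball (0:ℝ) r).isPreconnected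
      hg hbound (mem_ball_self hr0) hsum0 hy
  set F : ℝ → ℝ := fun z => ∑' m, g m z with hFdef
  set D : ℝ → ℝ := fun y => ∑' m, g' m y with hDdef
  -- summability inside the ball
  have hS0 : ∀ y : ℝ, |y| ≤ r → Summable (fun m => g m y) := by
    intro y hy
    apply Summable.of_norm_bounded hu'
    intro m
    simp only [hgdef, Real.norm_eq_abs, abs_mul, abs_pow]
    have h1 : |y| ^ m ≤ r ^ m := pow_le_pow_left₀ (abs_nonneg y) hy m
    have h2 : |kneg β m| ≤ |kneg β m| * ((m:ℝ) + 1) := by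
      nlinarith [abs_nonneg (kneg β m), Nat.cast_nonneg (α := ℝ) m]
    nlinarith [abs_nonneg (kneg β m), pow_nonneg (abs_nonneg y) m, pow_nonneg hr0.le m,
      Nat.cast_nonneg (α := ℝ) m]
  -- the ODE relation
  have hrel : ∀ y ∈ ball (0 : ℝ) r, (1 - y) * D y = -β * F y := by
    intro y hy
    have hyr : |y| < r := by rwa [mem_ball, dist_zero_right, Real.norm_eq_abs] at hy
    have S1 : Summable (fun m => g' m y) :=
      Summable.of_norm_bounded hu (fun m => hbound m y hy)
    have hD : HasSum (fun m => g' m y) (D y) := S1.hasSum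
    have hshift : HasSum (fun m => g' (m + 1) y) (D y) := by
      have h0 : ∑ i ∈ Finset.range 1, g' i y = 0 := by simp [hg'def]
      have := (hasSum_nat_add_iff' (f := fun m => g' m y) 1).2 hD
      rwa [h0, sub_zero] at this
    have heq : ∀ m : ℕ, g' (m + 1) y = ((m : ℝ) - β) * kneg β m * y ^ m := by
      intro m
      simp only [hg'def, Nat.add_sub_cancel]
      have h := kneg_succ hβ m
      push_cast
      calc kneg β (m + 1) * (((m:ℝ) + 1) * y ^ m)
          = (((m:ℝ) + 1) * kneg β (m + 1)) * y ^ m := by ring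
        _ = (((m:ℝ) - β) * kneg β m) * y ^ m := by rw [h]
        _ = ((m:ℝ) - β) * kneg β m * y ^ m := by ring
    have hS0y : Summable (fun m => g m y) := hS0 y hyr.le
    have hFy : HasSum (fun m => g m y) (F y) := hS0y.hasSum
    have hshift2 : HasSum (fun m : ℕ => ((m : ℝ) - β) * kneg β m * y ^ m) (D y) := by
      rwa [funext heq] at hshift
    have hyD : HasSum (fun m : ℕ => (m : ℝ) * kneg β m * y ^ m) (y * D y) := by
      have h2 := hD.mul_left y
      have h3 : (fun m => y * g' m y) = fun m : ℕ => (m : ℝ) * kneg β m * y ^ m := by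
        funext m
        match m with
        | 0 => simp [hg'def]
        | (k + 1) =>
          simp only [hg'def, Nat.add_sub_cancel, pow_succ]
          push_cast
          ring
      rwa [h3] at h2
    have hβF : HasSum (fun m => β * (kneg β m * y ^ m)) (β * F y) := hFy.mul_left β
    have hcomb : HasSum (fun m : ℕ => ((m : ℝ) - β) * kneg β m * y ^ m) (y * D y - β * F y) := by
      have h4 := hyD.sub hβF
      have h5 : (fun m : ℕ => (m : ℝ) * kneg β m * y ^ m - β * (kneg β m * y ^ m)) =
          fun m : ℕ => ((m : ℝ) - β) * kneg β m * y ^ m := by funext m; ring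
      rwa [h5] at h4
    have hDeq : D y = y * D y - β * F y := hshift2.unique hcomb
    nlinarith [hDeq]
  -- set up the ODE uniqueness argument
  have h1x : (0 : ℝ) < 1 - x := by linarith
  set K : NNReal := Real.toNNReal (|β| / (1 - x)) with hKdef
  have hK : (K : ℝ) = |β| / (1 - x) := Real.coe_toNNReal _ (by positivity)
  set v : ℝ → ℝ → ℝ := fun s z => -β * (1 - min s x)⁻¹ * z with hvdef
  have hv : ∀ s, LipschitzOnWith K (v s) univ := by
    intro s
    apply LipschitzWith.lipschitzOnWith
    apply LipschitzWith.of_dist_le_mul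
    intro z z'
    have hmin : min s x ≤ x := min_le_right s x
    have h1m : 0 < 1 - min s x := by linarith
    rw [Real.dist_eq, Real.dist_eq]
    have heq2 : v s z - v s z' = (-β * (1 - min s x)⁻¹) * (z - z') := by
      simp only [hvdef]; ring
    rw [heq2, abs_mul]
    have h5 : |(-β) * (1 - min s x)⁻¹| = |β| * (1 - min s x)⁻¹ := by
      rw [abs_mul, abs_neg, abs_of_pos (inv_pos.2 h1m)]
    have h6 : (1 - min s x)⁻¹ ≤ (1 - x)⁻¹ := by
      apply inv_anti₀ h1x; linarith
    have h7 : |(-β) * (1 - min s x)⁻¹| ≤ (K : ℝ) := by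
      rw [h5, hK, div_eq_mul_inv]
      exact mul_le_mul_of_nonneg_left h6 (abs_nonneg β)
    exact mul_le_mul_of_nonneg_right h7 (abs_nonneg _) |>.trans
      (le_of_eq (by ring)) |>.trans (le_refl _)
  have hmemball : ∀ s ∈ Icc (0 : ℝ) x, s ∈ ball (0 : ℝ) r := by
    intro s hs
    rw [mem_ball, dist_zero_right, Real.norm_eq_abs, abs_of_nonneg hs.1]
    exact lt_of_le_of_lt hs.2 hrx
  have hFcont : ContinuousOn F (Icc 0 x) := fun s hs =>
    ((hFder s (hmemball s hs)).continuousAt).continuousWithinAt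
  have hF' : ∀ s ∈ Ico (0 : ℝ) x, HasDerivWithinAt F (v s (F s)) (Ici s) s := by
    intro s hs
    have hsball := hmemball s ⟨hs.1, hs.2.le⟩
    have hd := hFder s hsball
    have h1s : (1 : ℝ) - s ≠ 0 := by have := hs.2; intro h; nlinarith
    have hveq : v s (F s) = D s := by
      have hre := hrel s hsball
      have h2 : (1 - s) * D s = (1 - s) * (-β * (1 - s)⁻¹ * F s) := by
        rw [hre]; field_simp
      have h3 := mul_left_cancel₀ h1s h2
      simp only [hvdef, min_eq_left hs.2.le]
      rw [h3]
    rw [hveq]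
    exact hd.hasDerivWithinAt
  set G : ℝ → ℝ := fun z => (1 - z) ^ β with hGdef
  have hGcont : ContinuousOn G (Icc 0 x) := by
    apply ContinuousOn.rpow_const ((continuous_const.sub continuous_id).continuousOn)
    intro z hz
    exact Or.inl (by show (1:ℝ) - z ≠ 0; have := hz.2; exact ne_of_gt (by linarith))
  have hG' : ∀ s ∈ Ico (0 : ℝ) x, HasDerivWithinAt G (v s (G s)) (Ici s) s := by
    intro s hs
    have h1s : (0 : ℝ) < 1 - s := by have := hs.2; linarith
    have hdbase : HasDerivAt (fun y : ℝ => 1 - y) (-1) s := (hasDerivAt_id s).const_sub 1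
    have hd : HasDerivAt G (-1 * β * (1 - s) ^ (β - 1)) s :=
      hdbase.rpow_const (Or.inl h1s.ne')
    have hveq : v s (G s) = -1 * β * (1 - s) ^ (β - 1) := by
      simp only [hvdef, hGdef, min_eq_left hs.2.le]
      rw [show (1 - s : ℝ) ^ (β - 1) = (1 - s) ^ β / (1 - s) by
        rw [Real.rpow_sub h1s, Real.rpow_one]]
      field_simp
    rw [hveq]
    exact hd.hasDerivWithinAt
  have ha : F 0 = G 0 := by
    have h1 : F 0 = kneg β 0 := by
      simp only [hFdef]
      rw [tsum_eq_single 0 (fun m hm => by simp [hgdef, zero_pow hm])]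
      simp [hgdef]
    rw [h1, kneg_zero hβ]
    simp [hGdef]
  have hEq := ODE_solution_unique_of_mem_Icc_right (s := fun _ => (univ : Set ℝ))
    (fun s _ => hv s) hFcont hF' (fun _ _ => mem_univ _) hGcont hG' (fun _ _ => mem_univ _) ha
  have hFx : F x = (1 - x) ^ β := hEq ⟨hx0, le_rfl⟩
  have hsumx : Summable (fun m => g m x) := hS0 x (by rw [abs_of_nonneg hx0]; exact hrx.le)
  have := hsumx.hasSum
  rwa [show (∑' m, g m x) = (1 - x) ^ β from hFx] at this

end Binomial

section Main
variable {α : ℝ}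

lemma kneg_mul_choose (hα : ∀ z : ℤ, α ≠ z) (r s : ℕ) :
    kneg α (s + r) * (((s + r).choose r : ℕ) : ℝ) = kneg α r * kneg (α - r) s := by
  have hfac : (((s + r).choose r : ℕ) : ℝ) * (s.factorial : ℝ) * (r.factorial : ℝ)
      = ((s + r).factorial : ℝ) := by
    exact_mod_cast Nat.add_choose_mul_factorial_mul_factorial s r
  have gA := gamma_neg_ne_zero hα
  have gR := gamma_sub_ne_zero hα r
  have hsf : (s.factorial : ℝ) ≠ 0 := by positivity
  have hrf : (r.factorial : ℝ) ≠ 0 := by positivity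
  have hsrf : (((s + r).factorial : ℕ) : ℝ) ≠ 0 := by positivity
  rw [kneg_eq, kneg_eq, kneg_eq,
    show ((s : ℝ) - (α - (r : ℝ))) = (((s + r : ℕ)) : ℝ) - α by push_cast; ring,
    show (-(α - (r : ℝ))) = (r : ℝ) - α by ring]
  push_cast at hfac ⊢
  field_simp
  linear_combination (Real.Gamma ((s : ℝ) + (r : ℝ) - α)) * hfac

set_option maxHeartbeats 1000000 in
lemma hasSum_kneg_choose (hα : ∀ z : ℤ, α ≠ z) (r : ℕ) {x : ℝ} (hx0 : 0 ≤ x) (hx1 : x < 1) :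
    HasSum (fun m : ℕ => kneg α m * ((m.choose r : ℕ) : ℝ) * x ^ m)
      (kneg α r * x ^ r * (1 - x) ^ (α - r)) := by
  have hβ : ∀ z : ℤ, α - (r : ℝ) ≠ (z : ℝ) := fun z h => hα (z + r) (by push_cast at h ⊢; linarith)
  have hbase := hasSum_kneg hβ hx0 hx1
  have h1 := hbase.mul_left (kneg α r * x ^ r)
  have h2 : (fun s : ℕ => kneg α r * x ^ r * (kneg (α - r) s * x ^ s)) =
      fun s : ℕ => kneg α (s + r) * (((s + r).choose r : ℕ) : ℝ) * x ^ (s + r) := by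
    funext s
    rw [pow_add]
    linear_combination (-(x ^ s * x ^ r)) * kneg_mul_choose hα r s
  rw [h2] at h1
  have h4 : ∑ i ∈ Finset.range r, kneg α i * ((i.choose r : ℕ) : ℝ) * x ^ i = 0 := by
    apply Finset.sum_eq_zero
    intro i hi
    rw [Nat.choose_eq_zero_of_lt (Finset.mem_range.1 hi)]
    simp
  have h6 : HasSum (fun s : ℕ => kneg α (s + r) * (((s + r).choose r : ℕ) : ℝ) * x ^ (s + r))
      (kneg α r * x ^ r * (1 - x) ^ (α - r) -
        ∑ i ∈ Finset.range r, kneg α i * ((i.choose r : ℕ) : ℝ) * x ^ i) := by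
    rw [h4, sub_zero]; exact h1
  exact (hasSum_nat_add_iff' (f := fun m : ℕ => kneg α m * ((m.choose r : ℕ) : ℝ) * x ^ m) r).1 h6

set_option maxHeartbeats 1000000 in
lemma hasSum_vandermonde (hα : ∀ z : ℤ, α ≠ z) (n u : ℕ) {x : ℝ} (hx0 : 0 ≤ x) (hx1 : x < 1) :
    HasSum (fun m : ℕ => kneg α m * (((m + n).choose u : ℕ) : ℝ) * x ^ m)
      (∑ p ∈ Finset.HasAntidiagonal.antidiagonal u, ((n.choose p.2 : ℕ) : ℝ) *
        (kneg α p.1 * x ^ p.1 * (1 - x) ^ (α - p.1))) := by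
  have h := hasSum_sum (s := Finset.HasAntidiagonal.antidiagonal u)
    (f := fun p (m : ℕ) => ((n.choose p.2 : ℕ) : ℝ) * (kneg α m * ((m.choose p.1 : ℕ) : ℝ) * x ^ m))
    (a := fun p => ((n.choose p.2 : ℕ) : ℝ) * (kneg α p.1 * x ^ p.1 * (1 - x) ^ (α - p.1)))
    (fun p _ => (hasSum_kneg_choose hα p.1 hx0 hx1).mul_left _)
  have heq : (fun m : ℕ => ∑ p ∈ Finset.HasAntidiagonal.antidiagonal u,
      ((n.choose p.2 : ℕ) : ℝ) * (kneg α m * ((m.choose p.1 : ℕ) : ℝ) * x ^ m)) =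
      fun m : ℕ => kneg α m * (((m + n).choose u : ℕ) : ℝ) * x ^ m := by
    funext m
    rw [Nat.add_choose_eq m n u]
    push_cast
    rw [Finset.mul_sum, Finset.sum_mul]
    apply Finset.sum_congr rfl
    intro p _
    ring
  rw [← heq]
  exact h

end Main

set_option maxHeartbeats 1000000 in
/-- Theorem 2.3: key summation identity. -/
theorem stmt8 (α t : ℝ) (ht : 0 < t) (hα : 0 < α) (hαn : ∀ m : ℕ, α ≠ m) (n u : ℕ) :
    HasSum (fun i : ℕ =>
      Real.exp (-t * u) * (Nat.choose (max u n + i) u) * kneg α (max u n + i - n) *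
        (1 - Real.exp (-t)) ^ (max u n + i - u))
      (Real.exp (-t * α) * ∑ j ∈ Finset.range (min u n + 1),
        (Nat.choose n j) * kneg α (u - j) * Real.exp (-t * j) *
          (1 - Real.exp (-t)) ^ (n - j)) := by
  have hαZ : ∀ z : ℤ, α ≠ z := by
    intro z h
    rcases le_or_gt 0 z with hz | hz
    · lift z to ℕ using hz
      exact hαn z (by exact_mod_cast h)
    · have h2 : (z : ℝ) < 0 := by exact_mod_cast hz
      rw [h] at hα
      linarith
  set y : ℝ := Real.exp (-t) with hydef
  have hy0 : 0 < y := Real.exp_pos _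
  have hy1 : y < 1 := by
    calc y = Real.exp (-t) := hydef
      _ < Real.exp 0 := Real.exp_lt_exp.2 (by linarith)
      _ = 1 := Real.exp_zero
  set x : ℝ := 1 - y with hxdef
  have hx0 : 0 < x := by rw [hxdef]; linarith
  have hx1 : x < 1 := by rw [hxdef]; linarith
  have h1mx : 1 - x = y := by rw [hxdef]; ring
  clear_value x
  have hmain := hasSum_vandermonde hαZ n u hx0.le hx1
  simp only [h1mx] at hmain
  clear_value y
  set M : ℕ := max u n with hMdef
  have hnM : n ≤ M := le_max_right u n
  have huM : u ≤ M := le_max_left u n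
  have hMor : max u n = u ∨ max u n = n := max_choice u n
  rw [← hMdef] at hMor
  clear_value M
  set c0 : ℝ := y ^ u * x ^ n / x ^ u with hc0
  clear_value c0
  have h2 := hmain.mul_left c0
  have hshift := (hasSum_nat_add_iff'
    (f := fun m : ℕ => c0 * (kneg α m * (((m + n).choose u : ℕ) : ℝ) * x ^ m)) (M - n)).2 h2
  have hpre : ∑ i ∈ Finset.range (M - n),
      c0 * (kneg α i * (((i + n).choose u : ℕ) : ℝ) * x ^ i) = 0 := by
    apply Finset.sum_eq_zero
    intro i hi
    have hi' := Finset.mem_range.1 hi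
    have h3 : i + n < u := by rcases hMor with h | h <;> omega
    rw [Nat.choose_eq_zero_of_lt h3]
    simp
  rw [hpre, sub_zero] at hshift
  have hfun : ∀ i : ℕ, c0 * (kneg α (i + (M - n)) * (((i + (M - n) + n).choose u : ℕ) : ℝ) *
      x ^ (i + (M - n))) =
      Real.exp (-t * (u : ℝ)) * (((M + i).choose u : ℕ) : ℝ) * kneg α (M + i - n) *
        x ^ (M + i - u) := by
    intro i
    have e1 : i + (M - n) + n = M + i := by omega
    have e2 : M + i - n = i + (M - n) := by omega
    have e3 : Real.exp (-t * (u : ℝ)) = y ^ u := by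
      rw [mul_comm, Real.exp_nat_mul, ← hydef]
    have e4 : x ^ (M + i - u) * x ^ u = x ^ (i + (M - n)) * x ^ n := by
      rw [← pow_add, ← pow_add]; congr 1; omega
    have hxu : x ^ u ≠ 0 := pow_ne_zero _ hx0.ne'
    rw [e1, e2, e3, hc0]
    field_simp
    linear_combination (-(kneg α (i + (M - n)) * (((M + i).choose u : ℕ) : ℝ))) * e4
  simp only [hfun] at hshift
  convert hshift using 1
  · rfl
  -- it remains to prove the equality of the two sum values
  have hexpα : Real.exp (-t * α) = y ^ α := by
    rw [Real.rpow_def_of_pos hy0, hydef, Real.log_exp]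
  have hexpj : ∀ j : ℕ, Real.exp (-t * (j : ℝ)) = y ^ j := fun j => by
    rw [mul_comm, Real.exp_nat_mul, ← hydef]
  have hAD : (∑ p ∈ Finset.HasAntidiagonal.antidiagonal u, ((n.choose p.2 : ℕ) : ℝ) *
      (kneg α p.1 * x ^ p.1 * y ^ (α - (p.1 : ℝ)))) =
      ∑ j ∈ Finset.range (u + 1), ((n.choose (u - (u - j)) : ℕ) : ℝ) *
        (kneg α (u - j) * x ^ (u - j) * y ^ (α - ((u - j : ℕ) : ℝ))) := by
    rw [Finset.Nat.sum_antidiagonal_eq_sum_range_succ_mk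
      (fun p => ((n.choose p.2 : ℕ) : ℝ) * (kneg α p.1 * x ^ p.1 * y ^ (α - (p.1 : ℝ)))) u]
    rw [← Finset.sum_range_reflect]
    apply Finset.sum_congr rfl
    intro j hj
    have h5 : u + 1 - 1 - j = u - j := by omega
    rw [h5]
  have hzero : ∀ j ∈ Finset.range (u + 1), j ∉ Finset.range (min u n + 1) →
      ((n.choose (u - (u - j)) : ℕ) : ℝ) *
        (kneg α (u - j) * x ^ (u - j) * y ^ (α - ((u - j : ℕ) : ℝ))) = 0 := by
    intro j hj hj'
    have h5 := Finset.mem_range.1 hj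
    have h6 : min u n + 1 ≤ j := by
      by_contra hcon
      exact hj' (Finset.mem_range.2 (by omega))
    have h7 : n < u - (u - j) := by omega
    rw [Nat.choose_eq_zero_of_lt h7]
    simp
  have hsub : Finset.range (min u n + 1) ⊆ Finset.range (u + 1) :=
    Finset.range_subset_range.2 (by omega)
  rw [hAD, ← Finset.sum_subset hsub hzero] at hshift ⊢
  rw [Finset.mul_sum, Finset.mul_sum]
  apply Finset.sum_congr rfl
  intro j hj
  have hj' := Finset.mem_range.1 hj
  have hju : j ≤ u := by omega
  have hjn : j ≤ n := by omega
  have euu : u - (u - j) = j := by omega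
  have ecast : ((u - j : ℕ) : ℝ) = (u : ℝ) - (j : ℝ) := by
    push_cast [Nat.cast_sub hju]; ring
  rw [euu, hexpα, hexpj j, ecast]
  have ex : x ^ (n - j) * x ^ u = x ^ n * x ^ (u - j) := by
    rw [← pow_add, ← pow_add]; congr 1; omega
  have ey : y ^ (α - ((u : ℝ) - (j : ℝ))) * y ^ u = y ^ α * y ^ j := by
    rw [← Real.rpow_natCast y u, ← Real.rpow_natCast y j, ← Real.rpow_add hy0,
      ← Real.rpow_add hy0]
    congr 1; ring
  have key : y ^ (α - ((u : ℝ) - (j : ℝ))) * y ^ u * (x ^ n * x ^ (u - j)) =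
      y ^ α * y ^ j * (x ^ (n - j) * x ^ u) := by
    rw [ey, ← ex]
  have hxu : x ^ u ≠ 0 := pow_ne_zero _ hx0.ne'
  rw [hc0]
  field_simp
  linear_combination (-(((n.choose j : ℕ) : ℝ) * kneg α (u - j))) * key
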